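/- Let W : Fin n → Fin n → ℝ≥0 be such that for each i the i-th row sum equals the i-th column sum and is an integer. Suppose B' is the bipartite graph on parts X = {x_1,...,x_n}, Y = {y_1,...,y_n} whose edges are the pairs (x_i, y_j) with W_{ij} not an integer. If B' is acyclic (a forest), then B' has no edges, i.e., every entry of W is an integer. -/

import Mathlib

open scoped NNReal

def IsIntNN (x : ℝ≥0) : Prop := ∃ m : ℕ, x = (m : ℝ≥0)

/-- The bipartite graph of decimal (non-integer) entries of `W`: the left part is
`Sum.inl`-vertices (the `x_i`), the right part is `Sum.inr`-vertices (the `y_j`),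
and `x_i` is adjacent to `y_j` iff `W i j` is not an integer. -/
def decimalGraph {n : ℕ} (W : Fin n → Fin n → ℝ≥0) : SimpleGraph (Fin n ⊕ Fin n) where
  Adj a b :=
    match a, b with
    | Sum.inl i, Sum.inr j => ¬ IsIntNN (W i j)
    | Sum.inr j, Sum.inl i => ¬ IsIntNN (W i j)
    | _, _ => False
  symm := ⟨by rintro (i | i) (j | j) h <;> simp_all⟩
  loopless := ⟨by rintro (i | i) h <;> simp_all⟩

lemma isIntNN_sum {α : Type*} (s : Finset α) (f : α → ℝ≥0)
    (h : ∀ a ∈ s, IsIntNN (f a)) : IsIntNN (∑ a ∈ s, f a) := by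
  classical
  induction s using Finset.induction_on with
  | empty => exact ⟨0, by simp⟩
  | insert _ _ ha ih =>
    rw [Finset.sum_insert ha]
    obtain ⟨m, hm⟩ := h _ (Finset.mem_insert_self _ _)
    obtain ⟨k, hk⟩ := ih fun a has => h a (Finset.mem_insert_of_mem has)
    exact ⟨m + k, by rw [hm, hk]; push_cast; ring⟩

lemma isIntNN_of_add_nat {x : ℝ≥0} {k m : ℕ} (h : x + (k : ℝ≥0) = (m : ℝ≥0)) :
    IsIntNN x := by
  have hk : (k : ℝ≥0) ≤ (m : ℝ≥0) := le_add_self.trans h.le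
  have hkm : k ≤ m := by exact_mod_cast hk
  refine ⟨m - k, ?_⟩
  have : ((m - k : ℕ) : ℝ≥0) + (k : ℝ≥0) = (m : ℝ≥0) := by
    rw [← Nat.cast_add, Nat.sub_add_cancel hkm]
  exact add_right_cancel (h.trans this.symm)

/-- Every vertex incident to an edge of the decimal graph has a second neighbor. -/
lemma exists_second_neighbor {n : ℕ} (W : Fin n → Fin n → ℝ≥0)
    (hbal : ∀ i, ∑ j, W i j = ∑ k, W k i)
    (hint : ∀ i, ∃ m : ℕ, ∑ j, W i j = (m : ℝ≥0))
    {a b : Fin n ⊕ Fin n} (hab : (decimalGraph W).Adj a b) :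
    ∃ c, c ≠ b ∧ (decimalGraph W).Adj a c := by
  classical
  match a, b, hab with
  | Sum.inl i, Sum.inr j, hab =>
    by_contra hc
    push_neg at hc
    have hall : ∀ j' ≠ j, IsIntNN (W i j') := by
      intro j' hj'
      by_contra h'
      exact (hc (Sum.inr j') (by simpa using hj')) h'
    obtain ⟨m, hm⟩ := hint i
    have hsplit : ∑ j', W i j' = W i j + ∑ j' ∈ Finset.univ.erase j, W i j' := by
      rw [add_comm, Finset.sum_erase_add _ _ (Finset.mem_univ j)]
    obtain ⟨k, hk⟩ := isIntNN_sum (Finset.univ.erase j) (fun j' => W i j')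
      (fun j' hj' => hall j' (Finset.ne_of_mem_erase hj'))
    have key : W i j + (k : ℝ≥0) = (m : ℝ≥0) := by rw [← hk, ← hsplit]; exact hm
    exact hab (isIntNN_of_add_nat key)
  | Sum.inr j, Sum.inl i, hab =>
    by_contra hc
    push_neg at hc
    have hall : ∀ i' ≠ i, IsIntNN (W i' j) := by
      intro i' hi'
      by_contra h'
      exact (hc (Sum.inl i') (by simpa using hi')) h'
    obtain ⟨m, hm⟩ := hint j
    have hm' : ∑ k, W k j = (m : ℝ≥0) := by rw [← hbal j]; exact hm
    have hsplit : ∑ i', W i' j = W i j + ∑ i' ∈ Finset.univ.erase i, W i' j := by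
      rw [add_comm, Finset.sum_erase_add _ _ (Finset.mem_univ i)]
    obtain ⟨k, hk⟩ := isIntNN_sum (Finset.univ.erase i) (fun i' => W i' j)
      (fun i' hi' => hall i' (Finset.ne_of_mem_erase hi'))
    have key : W i j + (k : ℝ≥0) = (m : ℝ≥0) := by rw [← hk, ← hsplit]; exact hm'
    exact hab (isIntNN_of_add_nat key)

theorem acyclic_decimal_subgraph_is_empty {n : ℕ} (W : Fin n → Fin n → ℝ≥0)
    (hbal : ∀ i, ∑ j, W i j = ∑ k, W k i)
    (hint : ∀ i, ∃ m : ℕ, ∑ j, W i j = (m : ℝ≥0))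
    (hforest : (decimalGraph W).IsAcyclic) :
    ∀ i j, IsIntNN (W i j) := by
  classical
  by_contra hcon
  push_neg at hcon
  obtain ⟨i, j, hij⟩ := hcon
  have hadj : (decimalGraph W).Adj (Sum.inl i) (Sum.inr j) := hij
  let P : ℕ → Prop := fun L => ∃ (u v : Fin n ⊕ Fin n)
    (p : (decimalGraph W).Walk u v), p.IsPath ∧ p.length = L
  have hP1 : P 1 := ⟨Sum.inl i, Sum.inr j,
    SimpleGraph.Walk.cons hadj SimpleGraph.Walk.nil,
    by simp [SimpleGraph.Walk.cons_isPath_iff, hadj.ne], rfl⟩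
  have hbound : ∀ {L}, P L → L < Fintype.card (Fin n ⊕ Fin n) := by
    rintro L ⟨u, v, p, hp, rfl⟩
    exact hp.length_lt
  set L := Nat.findGreatest P (Fintype.card (Fin n ⊕ Fin n)) with hL
  have hPL : P L := Nat.findGreatest_spec (le_of_lt (hbound hP1)) hP1
  have hL1 : 1 ≤ L := Nat.le_findGreatest (le_of_lt (hbound hP1)) hP1
  obtain ⟨u, v, p, hp, hlen⟩ := hPL
  cases p with
  | nil => simp at hlen; omega
  | cons h q =>
    rename_i b
    obtain ⟨c, hcb, huc⟩ := exists_second_neighbor W hbal hint h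
    have hcu : c ≠ u := fun e => (decimalGraph W).loopless.irrefl u (e ▸ huc)
    have hqpath : q.IsPath := hp.of_cons
    have hunotq : u ∉ q.support := ((SimpleGraph.Walk.cons_isPath_iff h q).mp hp).2
    rcases Classical.em (c ∈ (SimpleGraph.Walk.cons h q).support) with hcp | hcp
    · -- build a cycle
      have hcq : c ∈ q.support := by
        have : c = u ∨ c ∈ q.support := by simpa using hcp
        exact this.resolve_left hcu
      set t := q.takeUntil c hcq with ht
      have htpath : t.IsPath := hqpath.takeUntil hcq
      have hunot : u ∉ t.support := fun hmem => hunotq (q.support_takeUntil_subset hcq hmem)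
      have hpath2 : (SimpleGraph.Walk.cons h t).IsPath :=
        (SimpleGraph.Walk.cons_isPath_iff h t).mpr ⟨htpath, hunot⟩
      let Pth : (decimalGraph W).Path u c := ⟨SimpleGraph.Walk.cons h t, hpath2⟩
      have hedge : s(u, c) ∉ (Pth.reverse : (decimalGraph W).Walk c u).edges := by
        intro hmem
        have hmem' : s(u, c) ∈ t.edges ∨ c = b ∨ u = b ∧ c = u := by
          simpa [Pth, SimpleGraph.Walk.edges_reverse, Sym2.eq_swap] using hmem
        rcases hmem' with h' | h' | ⟨_, h1⟩
        · exact hunot (t.fst_mem_support_of_mem_edges h')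
        · exact hcb h'
        · exact hcu h1
      exact hforest _ (SimpleGraph.Path.cons_isCycle Pth.reverse huc hedge)
    · -- extend the path, contradicting maximality
      have hpath2 : (SimpleGraph.Walk.cons huc.symm (SimpleGraph.Walk.cons h q)).IsPath :=
        (SimpleGraph.Walk.cons_isPath_iff _ _).mpr ⟨hp, hcp⟩
      have hPL1 : P (L + 1) := ⟨c, v, _, hpath2, by simp [hlen]⟩
      exact Nat.findGreatest_is_greatest (lt_add_one L) (le_of_lt (hbound hPL1)) hPL1
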